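/- arXiv:1909.08206 — 2 statements merged into one kernel-verified Lean document; each statement's English description precedes it below -/
import Mathlib

section
/- Let g: ℝ² → ℝ∞ be defined by g(z₁,z₂) = z₁·z₂ if z₂ = log(z₁) and z₁ > 0, and +∞ otherwise. Then the lower semicontinuous convex hull of g is σ_log(z₁,z₂) = z₁ log(z₁) if z₁ > 0 and z₂ ≤ log(z₁), and +∞ otherwise. (Equivalently, the closed convex hull of the epigraph of g equals the epigraph of this function.) -/
open Real Set Filter Topology

private def Sset : Set ((ℝ × ℝ) × ℝ) :=
  {q | 0 < q.1.1 ∧ q.1.2 ≤ Real.log q.1.1 ∧ q.1.1 * Real.log q.1.1 ≤ q.2}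

private def Eset : Set ((ℝ × ℝ) × ℝ) :=
  {q | 0 < q.1.1 ∧ q.1.2 = Real.log q.1.1 ∧ q.1.1 * Real.log q.1.1 ≤ q.2}

private lemma Eset_subset_Sset : Eset ⊆ Sset := fun _ hq => ⟨hq.1, hq.2.1.le, hq.2.2⟩

private lemma convex_Sset : Convex ℝ Sset := by
  rintro ⟨⟨x1, x2⟩, xt⟩ ⟨hx1, hx2, hxt⟩ ⟨⟨y1, y2⟩, yt⟩ ⟨hy1, hy2, hyt⟩ a b ha hb hab
  have h1 : 0 < a * x1 + b * y1 := by
    rcases eq_or_lt_of_le ha with h | h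
    · simp [← h] at hab ⊢; nlinarith
    · nlinarith
  refine ⟨h1, ?_, ?_⟩
  · calc a * x2 + b * y2 ≤ a * Real.log x1 + b * Real.log y1 := by
          have := mul_le_mul_of_nonneg_left hx2 ha
          have := mul_le_mul_of_nonneg_left hy2 hb
          simp only [smul_eq_mul] at *; linarith
      _ ≤ Real.log (a * x1 + b * y1) :=
          strictConcaveOn_log_Ioi.concaveOn.2 hx1 hy1 ha hb hab
  · calc (a * x1 + b * y1) * Real.log (a * x1 + b * y1)
        ≤ a * (x1 * Real.log x1) + b * (y1 * Real.log y1) :=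
          Real.convexOn_mul_log.2 hx1.le hy1.le ha hb hab
      _ ≤ a * xt + b * yt := by
          have := mul_le_mul_of_nonneg_left hxt ha
          have := mul_le_mul_of_nonneg_left hyt hb
          linarith

private lemma isClosed_Sset : IsClosed Sset := by
  refine isClosed_of_closure_subset ?_
  intro q hq
  obtain ⟨u, hu, hlim⟩ := mem_closure_iff_seq_limit.1 hq
  obtain ⟨⟨z1, z2⟩, t⟩ := q
  have ha : Tendsto (fun n => (u n).1.1) atTop (𝓝 z1) :=
    ((continuous_fst.comp continuous_fst).tendsto _).comp hlim
  have hb : Tendsto (fun n => (u n).1.2) atTop (𝓝 z2) :=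
    ((continuous_snd.comp continuous_fst).tendsto _).comp hlim
  have hc : Tendsto (fun n => (u n).2) atTop (𝓝 t) :=
    (continuous_snd.tendsto _).comp hlim
  have hz1 : 0 < z1 := by
    rcases lt_or_ge 0 z1 with h | h
    · exact h
    have hz10 : z1 = 0 := le_antisymm h (le_of_tendsto_of_tendsto' tendsto_const_nhds ha
      fun n => (hu n).1.le)
    have hwithin : Tendsto (fun n => (u n).1.1) atTop (𝓝[>] (0:ℝ)) := by
      rw [tendsto_nhdsWithin_iff]
      exact ⟨hz10 ▸ ha, Eventually.of_forall fun n => (hu n).1⟩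
    have hlogbot : Tendsto (fun n => Real.log (u n).1.1) atTop atBot :=
      Real.tendsto_log_nhdsGT_zero.comp hwithin
    have : Tendsto (fun n => (u n).1.2) atTop atBot :=
      tendsto_atBot_mono (fun n => (hu n).2.1) hlogbot
    exact absurd hb (not_tendsto_nhds_of_tendsto_atBot this _)
  have hloga : Tendsto (fun n => Real.log (u n).1.1) atTop (𝓝 (Real.log z1)) :=
    ((Real.continuousAt_log hz1.ne').tendsto).comp ha
  refine ⟨hz1, ?_, ?_⟩
  · exact le_of_tendsto_of_tendsto' hb hloga fun n => (hu n).2.1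
  · exact le_of_tendsto_of_tendsto' (ha.mul hloga) hc fun n => (hu n).2.2

private lemma Sset_subset : Sset ⊆ closure (convexHull ℝ Eset) := by
  rintro ⟨⟨z1, z2⟩, t⟩ ⟨hz1, hz2, ht⟩
  rcases eq_or_lt_of_le hz2 with heq | hlt
  · exact subset_closure (subset_convexHull ℝ _ ⟨hz1, heq, ht⟩)
  -- approximation
  set c : ℝ := Real.log z1 - z2 with hc
  have hcpos : 0 < c := by simp [hc]; linarith
  set μ : ℕ → ℝ := fun n => c / n with hμ
  set lam : ℕ → ℝ := fun n => 1 - c / n with hlam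
  set e : ℕ → ℝ := fun n => Real.exp (-(n:ℝ)) with he
  set x : ℕ → ℝ := fun n => (z1 - μ n * e n) / lam n with hx
  set s2 : ℕ → ℝ := fun n => e n * (-(n:ℝ)) with hs2
  set s1 : ℕ → ℝ := fun n => max (x n * Real.log (x n)) ((t - μ n * s2 n) / lam n) with hs1
  set v : ℕ → (ℝ × ℝ) × ℝ := fun n =>
    ((lam n * x n + μ n * e n, lam n * Real.log (x n) + μ n * (-(n:ℝ))),
      lam n * s1 n + μ n * s2 n) with hv
  have hμ0 : Tendsto μ atTop (𝓝 0) := tendsto_const_div_atTop_nhds_zero_nat c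
  have hlam1 : Tendsto lam atTop (𝓝 1) := by
    have h := (tendsto_const_nhds : Tendsto (fun _ : ℕ => (1:ℝ)) atTop (𝓝 1)).sub hμ0
    simpa using h
  have he0 : Tendsto e atTop (𝓝 0) :=
    Real.tendsto_exp_neg_atTop_nhds_zero.comp tendsto_natCast_atTop_atTop
  have hxlim : Tendsto x atTop (𝓝 z1) := by
    have : Tendsto (fun n => (z1 - μ n * e n) / lam n) atTop (𝓝 ((z1 - 0 * 0) / 1)) :=
      (tendsto_const_nhds.sub (hμ0.mul he0)).div hlam1 one_ne_zero
    simpa using this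
  have hxloglim : Tendsto (fun n => Real.log (x n)) atTop (𝓝 (Real.log z1)) :=
    ((Real.continuousAt_log hz1.ne').tendsto).comp hxlim
  have hs2lim : Tendsto s2 atTop (𝓝 0) := by
    have h := (Real.tendsto_pow_mul_exp_neg_atTop_nhds_zero 1).comp
      (tendsto_natCast_atTop_atTop (R := ℝ))
    have : Tendsto (fun n : ℕ => (n:ℝ) * Real.exp (-(n:ℝ))) atTop (𝓝 0) := by
      simpa [Function.comp_def] using h
    have := this.neg
    simp only [neg_zero] at this
    exact this.congr fun n => by simp [hs2, he]; ring
  -- eventual facts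
  have hev : ∀ᶠ n : ℕ in atTop, c < (n:ℝ) ∧ 0 < x n := by
    have h1 : ∀ᶠ n : ℕ in atTop, c < (n:ℝ) :=
      (tendsto_natCast_atTop_atTop (R := ℝ)).eventually_gt_atTop c
    have h2 : ∀ᶠ n : ℕ in atTop, 0 < x n := hxlim.eventually (eventually_gt_nhds hz1)
    exact h1.and h2
  -- membership
  have hmem : ∀ᶠ n : ℕ in atTop, v n ∈ convexHull ℝ Eset := by
    filter_upwards [hev] with n ⟨hcn, hxn⟩
    have hcn0 : (0:ℝ) < n := lt_of_le_of_lt hcpos.le hcn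
    have hμpos : 0 < μ n := div_pos hcpos hcn0
    have hμlt : μ n < 1 := (div_lt_one hcn0).2 hcn
    have hlampos : 0 < lam n := by simp only [hlam]; linarith
    have hp : ((x n, Real.log (x n)), s1 n) ∈ Eset :=
      ⟨hxn, rfl, le_max_left _ _⟩
    have hq : ((e n, -(n:ℝ)), s2 n) ∈ Eset := by
      refine ⟨Real.exp_pos _, by simp [he], ?_⟩
      simp [he, hs2, Real.log_exp]
    apply segment_subset_convexHull hp hq
    refine ⟨lam n, μ n, hlampos.le, hμpos.le, by simp only [hlam, hμ]; ring, ?_⟩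
    simp only [hv, Prod.smul_mk, smul_eq_mul, Prod.mk_add_mk]
  -- convergence
  have hlim1 : Tendsto (fun n => lam n * x n + μ n * e n) atTop (𝓝 z1) := by
    have h : ∀ᶠ n : ℕ in atTop, lam n * x n + μ n * e n = z1 := by
      filter_upwards [hev] with n ⟨hcn, _⟩
      have hcn0 : (0:ℝ) < n := lt_of_le_of_lt hcpos.le hcn
      have hlamne : lam n ≠ 0 := by
        have : μ n < 1 := (div_lt_one hcn0).2 hcn
        simp only [hlam]; intro hcontra
        simp only [hμ] at this; linarith [sub_eq_zero.1 hcontra]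
      rw [show x n = (z1 - μ n * e n) / lam n from rfl, mul_div_assoc', mul_div_cancel_left₀ _ hlamne]
      ring
    exact Tendsto.congr' (h.mono fun n hn => hn.symm) tendsto_const_nhds
  have hlim2 : Tendsto (fun n => lam n * Real.log (x n) + μ n * (-(n:ℝ))) atTop (𝓝 z2) := by
    have h : ∀ᶠ n : ℕ in atTop, lam n * Real.log (x n) - c
        = lam n * Real.log (x n) + μ n * (-(n:ℝ)) := by
      filter_upwards [hev] with n ⟨hcn, _⟩
      have hcn0 : (0:ℝ) ≠ (n:ℝ) := (lt_of_le_of_lt hcpos.le hcn).ne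
      rw [mul_neg, show μ n * (n:ℝ) = c from div_mul_cancel₀ c hcn0.symm]
      ring
    refine Tendsto.congr' h ?_
    have : Tendsto (fun n => lam n * Real.log (x n) - c) atTop (𝓝 (1 * Real.log z1 - c)) :=
      (hlam1.mul hxloglim).sub tendsto_const_nhds
    simpa [hc] using this
  have hlim3 : Tendsto (fun n => lam n * s1 n + μ n * s2 n) atTop (𝓝 t) := by
    have h : ∀ᶠ n : ℕ in atTop, max (lam n * (x n * Real.log (x n)) + μ n * s2 n) t
        = lam n * s1 n + μ n * s2 n := by
      filter_upwards [hev] with n ⟨hcn, _⟩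
      have hcn0 : (0:ℝ) < n := lt_of_le_of_lt hcpos.le hcn
      have hμlt : μ n < 1 := (div_lt_one hcn0).2 hcn
      have hlampos : 0 < lam n := by simp only [hlam, hμ] at hμlt ⊢; linarith
      have hm : lam n * s1 n = max (lam n * (x n * Real.log (x n))) (t - μ n * s2 n) := by
        simp only [hs1]
        rw [mul_max_of_nonneg _ _ hlampos.le]
        congr 1
        field_simp
      rw [hm, ← max_add_add_right]
      congr 1
      ring
    refine Tendsto.congr' h ?_
    have hbase : Tendsto (fun n => lam n * (x n * Real.log (x n)) + μ n * s2 n) atTop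
        (𝓝 (1 * (z1 * Real.log z1) + 0 * 0)) :=
      (hlam1.mul (hxlim.mul hxloglim)).add (hμ0.mul hs2lim)
    have := hbase.max (tendsto_const_nhds : Tendsto (fun _ : ℕ => t) atTop (𝓝 t))
    simp only [one_mul, zero_mul, add_zero] at this
    rwa [max_eq_right ht] at this
  have hvlim : Tendsto v atTop (𝓝 ((z1, z2), t)) :=
    (hlim1.prodMk_nhds hlim2).prodMk_nhds hlim3
  exact mem_closure_of_tendsto hvlim hmem

/-- Let `g(z₁,z₂) = z₁·z₂` if `z₂ = log z₁` with `z₁ > 0`, and `+∞` otherwise.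
Then the lsc convex hull of `g` is `σ_log(z₁,z₂) = z₁ log z₁` if `z₁ > 0` and
`z₂ ≤ log z₁`, and `+∞` otherwise; equivalently the closed convex hull of the
epigraph of `g` equals the epigraph of this function. -/
theorem stmt_3 (g σ : ℝ × ℝ → EReal)
    (hg_on : ∀ p : ℝ × ℝ, 0 < p.1 → p.2 = Real.log p.1 → g p = ((p.1 * p.2 : ℝ) : EReal))
    (hg_off : ∀ p : ℝ × ℝ, ¬(0 < p.1 ∧ p.2 = Real.log p.1) → g p = ⊤)
    (hσ_on : ∀ p : ℝ × ℝ, 0 < p.1 → p.2 ≤ Real.log p.1 →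
      σ p = ((p.1 * Real.log p.1 : ℝ) : EReal))
    (hσ_off : ∀ p : ℝ × ℝ, ¬(0 < p.1 ∧ p.2 ≤ Real.log p.1) → σ p = ⊤) :
    closure (convexHull ℝ {q : (ℝ × ℝ) × ℝ | g q.1 ≤ (q.2 : EReal)})
      = {q : (ℝ × ℝ) × ℝ | σ q.1 ≤ (q.2 : EReal)} := by
  have hE : {q : (ℝ × ℝ) × ℝ | g q.1 ≤ (q.2 : EReal)} = Eset := by
    ext q
    by_cases h : 0 < q.1.1 ∧ q.1.2 = Real.log q.1.1
    · rw [Set.mem_setOf_eq, hg_on _ h.1 h.2, EReal.coe_le_coe_iff]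
      constructor
      · intro hle; exact ⟨h.1, h.2, by rw [← h.2]; exact hle⟩
      · intro hm; rw [h.2]; exact hm.2.2
    · rw [Set.mem_setOf_eq, hg_off _ h]
      simp only [top_le_iff]
      constructor
      · intro hc; exact absurd hc (EReal.coe_ne_top _)
      · intro hm; exact absurd ⟨hm.1, hm.2.1⟩ h
  have hS : {q : (ℝ × ℝ) × ℝ | σ q.1 ≤ (q.2 : EReal)} = Sset := by
    ext q
    by_cases h : 0 < q.1.1 ∧ q.1.2 ≤ Real.log q.1.1
    · rw [Set.mem_setOf_eq, hσ_on _ h.1 h.2, EReal.coe_le_coe_iff]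
      exact ⟨fun hle => ⟨h.1, h.2, hle⟩, fun hm => hm.2.2⟩
    · rw [Set.mem_setOf_eq, hσ_off _ h]
      simp only [top_le_iff]
      constructor
      · intro hc; exact absurd hc (EReal.coe_ne_top _)
      · intro hm; exact absurd ⟨hm.1, hm.2.1⟩ h
  rw [hE, hS]
  refine le_antisymm ?_ Sset_subset
  have : convexHull ℝ Eset ⊆ Sset :=
    convexHull_min Eset_subset_Sset convex_Sset
  exact closure_minimal this isClosed_Sset
end

section
/- Let (xₙ), (yₙ), (zₙ) be sequences in a real Hilbert (or normed) space X with ‖xₙ‖ → ∞. Suppose that for every subsequence (y_{kₙ}) with ‖y_{kₙ}‖ → ∞ we have ‖z_{kₙ}‖²/‖y_{kₙ}‖ → ∞. Then (‖xₙ − yₙ‖² + ‖zₙ‖²)/‖xₙ‖ → ∞ as n → ∞. -/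
/-- Let `(xₙ)`, `(yₙ)`, `(zₙ)` be sequences in a real inner product space with
`‖xₙ‖ → ∞`. If every subsequence `(y_{kₙ})` with `‖y_{kₙ}‖ → ∞` satisfies
`‖z_{kₙ}‖²/‖y_{kₙ}‖ → ∞`, then `(‖xₙ − yₙ‖² + ‖zₙ‖²)/‖xₙ‖ → ∞`. -/
theorem stmt_12 {X : Type*} [NormedAddCommGroup X] [InnerProductSpace ℝ X]
    (x y z : ℕ → X)
    (hx : Filter.Tendsto (fun n => ‖x n‖) Filter.atTop Filter.atTop)
    (hyz : ∀ k : ℕ → ℕ, StrictMono k →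
      Filter.Tendsto (fun n => ‖y (k n)‖) Filter.atTop Filter.atTop →
      Filter.Tendsto (fun n => ‖z (k n)‖ ^ 2 / ‖y (k n)‖) Filter.atTop Filter.atTop) :
    Filter.Tendsto (fun n => (‖x n - y n‖ ^ 2 + ‖z n‖ ^ 2) / ‖x n‖)
      Filter.atTop Filter.atTop := by
  by_contra h
  rw [Filter.tendsto_atTop] at h
  push_neg at h
  obtain ⟨C, hC⟩ := h
  obtain ⟨φ, hφ, hφC⟩ := Filter.extraction_of_frequently_atTop hC
  have hxφ : Filter.Tendsto (fun n => ‖x (φ n)‖) Filter.atTop Filter.atTop :=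
    hx.comp hφ.tendsto_atTop
  have hev : ∀ᶠ n in Filter.atTop, max (4 * C + 4) 1 ≤ ‖x (φ n)‖ :=
    hxφ.eventually_ge_atTop _
  -- key pointwise bounds
  have key : ∀ᶠ n in Filter.atTop,
      ‖x (φ n)‖ / 2 ≤ ‖y (φ n)‖ ∧ ‖z (φ n)‖ ^ 2 / ‖y (φ n)‖ < 2 * C := by
    filter_upwards [hev] with n hn
    set M := ‖x (φ n)‖ with hM
    set a := ‖x (φ n) - y (φ n)‖ with ha
    set b := ‖z (φ n)‖ with hb
    have hM1 : (1:ℝ) ≤ M := le_trans (le_max_right _ _) hn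
    have hMC : 4 * C + 4 ≤ M := le_trans (le_max_left _ _) hn
    have hMpos : (0:ℝ) < M := lt_of_lt_of_le one_pos hM1
    have hquot : (a ^ 2 + b ^ 2) / M < C := hφC n
    have hsum : a ^ 2 + b ^ 2 < C * M := by
      rwa [div_lt_iff₀ hMpos] at hquot
    have ha0 : 0 ≤ a := norm_nonneg _
    have hb0 : 0 ≤ b := norm_nonneg _
    have hC0 : 0 < C := by nlinarith
    -- a < M/2
    have haM : a < M / 2 := by nlinarith
    have hylo : M / 2 ≤ ‖y (φ n)‖ := by
      have := norm_sub_norm_le (x (φ n)) (y (φ n))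
      rw [← ha, ← hM] at this
      linarith
    refine ⟨hylo, ?_⟩
    have hypos : 0 < ‖y (φ n)‖ := lt_of_lt_of_le (by linarith) hylo
    have hb2 : b ^ 2 < C * M := by nlinarith
    calc b ^ 2 / ‖y (φ n)‖ ≤ b ^ 2 / (M / 2) := by
          apply div_le_div_of_nonneg_left (by positivity) (by linarith) hylo
      _ < 2 * C := by
          rw [div_lt_iff₀ (by linarith)]
          nlinarith
  have hyφ : Filter.Tendsto (fun n => ‖y (φ n)‖) Filter.atTop Filter.atTop := by
    refine Filter.tendsto_atTop_mono' _ ?_ (hxφ.atTop_div_const two_pos)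
    filter_upwards [key] with n hn using hn.1
  have hzφ := hyz φ hφ hyφ
  have := (hzφ.eventually_ge_atTop (2 * C)).and key
  obtain ⟨n, h1, _, h2⟩ := this.exists
  exact absurd h1 (not_le.mpr h2)
end
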